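/- Let U : ℂ → ℝ and let ψ₁, ψ₂ : ℂ → ℂ be continuously ℝ-differentiable functions satisfying the Dirac equation ∂ψ₂ = −U·ψ₁ and ∂̄ψ₁ = U·ψ₂. Then the following three identities hold everywhere: (i) ∂̄(conj(ψ₂)² + ψ₁²) + ∂(conj(ψ₁)² + ψ₂²) = 0; (ii) ∂̄(conj(ψ₂)² − ψ₁²) + ∂(conj(ψ₁)² − ψ₂²) = 0; (iii) ∂̄(ψ₁·conj(ψ₂)) = ∂(conj(ψ₁)·ψ₂). Consequently the three 1-forms occurring in the Weierstrass representation formulas (15), namely (conj(ψ₂)²+ψ₁²)dz − (conj(ψ₁)²+ψ₂²)dz̄, (conj(ψ₂)²−ψ₁²)dz − (conj(ψ₁)²−ψ₂²)dz̄, and ψ₁conj(ψ₂)dz + conj(ψ₁)ψ₂dz̄, are closed. -/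

import Mathlib

/-- The Wirtinger derivative `∂f(z) = ½(D₁f(z) − i·Dᵢf(z))`. -/
noncomputable def wd (f : ℂ → ℂ) (z : ℂ) : ℂ :=
  (1 / 2) * (fderiv ℝ f z 1 - Complex.I * fderiv ℝ f z Complex.I)

/-- The conjugate Wirtinger derivative `∂̄f(z) = ½(D₁f(z) + i·Dᵢf(z))`. -/
noncomputable def wdbar (f : ℂ → ℂ) (z : ℂ) : ℂ :=
  (1 / 2) * (fderiv ℝ f z 1 + Complex.I * fderiv ℝ f z Complex.I)

section helpers
variable {f g : ℂ → ℂ} {z : ℂ}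

lemma fderiv_conj_apply (hf : DifferentiableAt ℝ f z) (v : ℂ) :
    fderiv ℝ (fun w => starRingEnd ℂ (f w)) z v = starRingEnd ℂ (fderiv ℝ f z v) := by
  have : (fun w => starRingEnd ℂ (f w)) = Complex.conjCLE ∘ f := rfl
  rw [this, fderiv_comp z Complex.conjCLE.differentiable.differentiableAt hf,
    Complex.conjCLE.fderiv]
  rfl

lemma wd_conj (hf : DifferentiableAt ℝ f z) :
    wd (fun w => starRingEnd ℂ (f w)) z = starRingEnd ℂ (wdbar f z) := by
  simp only [wd, wdbar, fderiv_conj_apply hf, map_mul, map_add, map_sub, Complex.conj_I,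
    map_div₀, map_one, map_ofNat]
  ring

lemma wdbar_conj (hf : DifferentiableAt ℝ f z) :
    wdbar (fun w => starRingEnd ℂ (f w)) z = starRingEnd ℂ (wd f z) := by
  simp only [wd, wdbar, fderiv_conj_apply hf, map_mul, map_add, map_sub, Complex.conj_I,
    map_div₀, map_one, map_ofNat]
  ring

lemma wd_add (hf : DifferentiableAt ℝ f z) (hg : DifferentiableAt ℝ g z) :
    wd (fun w => f w + g w) z = wd f z + wd g z := by
  simp only [wd, fderiv_fun_add hf hg, ContinuousLinearMap.add_apply]; ring

lemma wdbar_add (hf : DifferentiableAt ℝ f z) (hg : DifferentiableAt ℝ g z) :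
    wdbar (fun w => f w + g w) z = wdbar f z + wdbar g z := by
  simp only [wdbar, fderiv_fun_add hf hg, ContinuousLinearMap.add_apply]; ring

lemma wd_sub (hf : DifferentiableAt ℝ f z) (hg : DifferentiableAt ℝ g z) :
    wd (fun w => f w - g w) z = wd f z - wd g z := by
  simp only [wd, fderiv_fun_sub hf hg, ContinuousLinearMap.sub_apply]; ring

lemma wdbar_sub (hf : DifferentiableAt ℝ f z) (hg : DifferentiableAt ℝ g z) :
    wdbar (fun w => f w - g w) z = wdbar f z - wdbar g z := by
  simp only [wdbar, fderiv_fun_sub hf hg, ContinuousLinearMap.sub_apply]; ring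

lemma wd_mul (hf : DifferentiableAt ℝ f z) (hg : DifferentiableAt ℝ g z) :
    wd (fun w => f w * g w) z = f z * wd g z + g z * wd f z := by
  simp only [wd, fderiv_fun_mul hf hg, ContinuousLinearMap.add_apply,
    ContinuousLinearMap.smul_apply, smul_eq_mul]; ring

lemma wdbar_mul (hf : DifferentiableAt ℝ f z) (hg : DifferentiableAt ℝ g z) :
    wdbar (fun w => f w * g w) z = f z * wdbar g z + g z * wdbar f z := by
  simp only [wdbar, fderiv_fun_mul hf hg, ContinuousLinearMap.add_apply,
    ContinuousLinearMap.smul_apply, smul_eq_mul]; ring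

lemma wd_sq (hf : DifferentiableAt ℝ f z) :
    wd (fun w => f w ^ 2) z = 2 * f z * wd f z := by
  have : (fun w => f w ^ 2) = fun w => f w * f w := by funext w; ring
  rw [this, wd_mul hf hf]; ring

lemma wdbar_sq (hf : DifferentiableAt ℝ f z) :
    wdbar (fun w => f w ^ 2) z = 2 * f z * wdbar f z := by
  have : (fun w => f w ^ 2) = fun w => f w * f w := by funext w; ring
  rw [this, wdbar_mul hf hf]; ring

end helpers

/-- If `(ψ₁, ψ₂)` solves the Dirac equation `∂ψ₂ = −U·ψ₁`, `∂̄ψ₁ = U·ψ₂` with a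
real-valued potential `U`, then the three identities
(i) `∂̄(conj(ψ₂)² + ψ₁²) + ∂(conj(ψ₁)² + ψ₂²) = 0`,
(ii) `∂̄(conj(ψ₂)² − ψ₁²) + ∂(conj(ψ₁)² − ψ₂²) = 0`,
(iii) `∂̄(ψ₁·conj(ψ₂)) = ∂(conj(ψ₁)·ψ₂)`
hold everywhere; i.e. the three 1-forms in the Weierstrass representation (15) are closed. -/
theorem weierstrass_forms_closed
    (U : ℂ → ℝ) (ψ₁ ψ₂ : ℂ → ℂ)
    (hψ₁ : ContDiff ℝ 1 ψ₁) (hψ₂ : ContDiff ℝ 1 ψ₂)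
    (hD1 : ∀ z, wd ψ₂ z = -(U z : ℂ) * ψ₁ z)
    (hD2 : ∀ z, wdbar ψ₁ z = (U z : ℂ) * ψ₂ z) :
    (∀ z, wdbar (fun w => (starRingEnd ℂ (ψ₂ w)) ^ 2 + (ψ₁ w) ^ 2) z
        + wd (fun w => (starRingEnd ℂ (ψ₁ w)) ^ 2 + (ψ₂ w) ^ 2) z = 0) ∧
    (∀ z, wdbar (fun w => (starRingEnd ℂ (ψ₂ w)) ^ 2 - (ψ₁ w) ^ 2) z
        + wd (fun w => (starRingEnd ℂ (ψ₁ w)) ^ 2 - (ψ₂ w) ^ 2) z = 0) ∧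
    (∀ z, wdbar (fun w => ψ₁ w * starRingEnd ℂ (ψ₂ w)) z
        = wd (fun w => starRingEnd ℂ (ψ₁ w) * ψ₂ w) z) := by
  have d1 : ∀ z, DifferentiableAt ℝ ψ₁ z := fun z => (hψ₁.differentiable one_ne_zero) z
  have d2 : ∀ z, DifferentiableAt ℝ ψ₂ z := fun z => (hψ₂.differentiable one_ne_zero) z
  have dc1 : ∀ z, DifferentiableAt ℝ (fun w => starRingEnd ℂ (ψ₁ w)) z := fun z =>
    (Complex.conjCLE.differentiable.differentiableAt).comp z (d1 z)
  have dc2 : ∀ z, DifferentiableAt ℝ (fun w => starRingEnd ℂ (ψ₂ w)) z := fun z =>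
    (Complex.conjCLE.differentiable.differentiableAt).comp z (d2 z)
  have dsq : ∀ (f : ℂ → ℂ) z, DifferentiableAt ℝ f z → DifferentiableAt ℝ (fun w => f w ^ 2) z :=
    fun f z hf => hf.pow 2
  refine ⟨fun z => ?_, fun z => ?_, fun z => ?_⟩
  · rw [wdbar_add (dsq _ z (dc2 z)) (dsq _ z (d1 z)),
      wd_add (dsq _ z (dc1 z)) (dsq _ z (d2 z)),
      wdbar_sq (dc2 z), wdbar_sq (d1 z), wd_sq (dc1 z), wd_sq (d2 z),
      wdbar_conj (d2 z), wd_conj (d1 z), hD1 z, hD2 z]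
    simp only [map_mul, map_neg, Complex.conj_ofReal]
    ring
  · rw [wdbar_sub (dsq _ z (dc2 z)) (dsq _ z (d1 z)),
      wd_sub (dsq _ z (dc1 z)) (dsq _ z (d2 z)),
      wdbar_sq (dc2 z), wdbar_sq (d1 z), wd_sq (dc1 z), wd_sq (d2 z),
      wdbar_conj (d2 z), wd_conj (d1 z), hD1 z, hD2 z]
    simp only [map_mul, map_neg, Complex.conj_ofReal]
    ring
  · rw [wdbar_mul (d1 z) (dc2 z), wd_mul (dc1 z) (d2 z),
      wdbar_conj (d2 z), wd_conj (d1 z), hD1 z, hD2 z]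
    simp only [map_mul, map_neg, Complex.conj_ofReal]
    ring
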